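/- Let A be a real m×m matrix, s a real eigenvalue of A, and ξ ∈ GE_s(A) with ξ ≠ 0; let ν be the order of ξ, i.e., the smallest positive integer with (A − sI)^ν ξ = 0. For x ∈ ℝ^m define φ_x : ℝ → ℝ by φ_x(τ) = ‖(A − τI)^ν x‖². Then there exist constants ε > 0 and L₀, L₁ > 0 such that: for every x ∈ ℝ^m with ‖x − ξ‖ ≤ ε, the function φ_x attains a global minimum on ℝ at a unique point τ_x, and moreover |τ_x − s| ≤ L₀·‖x − ξ‖ and φ_x(τ_x) ≤ L₁·‖x − ξ‖. -/

import Mathlib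

open Matrix

/-- Matrix exponential of a real square matrix. -/
noncomputable def mexp {m : ℕ} (M : Matrix (Fin m) (Fin m) ℝ) : Matrix (Fin m) (Fin m) ℝ :=
  (NormedSpace.expSeries ℝ (Matrix (Fin m) (Fin m) ℝ)).sum M

/-- Frobenius norm of a real square matrix. -/
noncomputable def fnorm {m : ℕ} (M : Matrix (Fin m) (Fin m) ℝ) : ℝ :=
  Real.sqrt (∑ i, ∑ j, (M i j) ^ 2)

/-- Euclidean norm of a vector in ℝ^m. -/
noncomputable def vnorm {m : ℕ} (x : Fin m → ℝ) : ℝ :=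
  Real.sqrt (∑ i, (x i) ^ 2)

/-- Frobenius inner product ⟨M, N⟩ = trace(Mᵀ N). -/
def finner {m : ℕ} (M N : Matrix (Fin m) (Fin m) ℝ) : ℝ :=
  ∑ i, ∑ j, M i j * N i j

/-- The generalized eigenspace GE_s(A) = {x : (A - s•I)^k x = 0 for some k ≥ 1},
as a submodule of ℝ^m. -/
def GEsub {m : ℕ} (A : Matrix (Fin m) (Fin m) ℝ) (s : ℝ) : Submodule ℝ (Fin m → ℝ) where
  carrier := {x | ∃ k : ℕ, 1 ≤ k ∧ ((A - s • 1) ^ k).mulVec x = 0}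
  zero_mem' := ⟨1, le_refl 1, Matrix.mulVec_zero _⟩
  add_mem' := by
    rintro a b ⟨k, hk, ha⟩ ⟨l, hl, hb⟩
    refine ⟨max k l, le_trans hk (le_max_left _ _), ?_⟩
    have h1 : ((A - s • 1) ^ (max k l)).mulVec a = 0 := by
      have h : (A - s • 1) ^ (max k l) = (A - s • 1) ^ (max k l - k) * (A - s • 1) ^ k := by
        rw [← pow_add]; congr 1; omega
      rw [h, ← Matrix.mulVec_mulVec, ha, Matrix.mulVec_zero]
    have h2 : ((A - s • 1) ^ (max k l)).mulVec b = 0 := by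
      have h : (A - s • 1) ^ (max k l) = (A - s • 1) ^ (max k l - l) * (A - s • 1) ^ l := by
        rw [← pow_add]; congr 1; omega
      rw [h, ← Matrix.mulVec_mulVec, hb, Matrix.mulVec_zero]
    rw [Matrix.mulVec_add, h1, h2, add_zero]
  smul_mem' := by
    rintro c a ⟨k, hk, ha⟩
    exact ⟨k, hk, by rw [Matrix.mulVec_smul, ha, smul_zero]⟩

open Matrix Finset

/-- coefficient functions -/
noncomputable def q0 (ν k : ℕ) (σ : ℝ) : ℝ := (-σ) ^ (ν - k)
noncomputable def q1 (ν k : ℕ) (σ : ℝ) : ℝ := -((ν - k : ℕ) : ℝ) * (-σ) ^ (ν - k - 1)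
noncomputable def q2 (ν k : ℕ) (σ : ℝ) : ℝ :=
  ((ν - k : ℕ) : ℝ) * ((ν - k - 1 : ℕ) : ℝ) * (-σ) ^ (ν - k - 1 - 1)

lemma hasDerivAt_negpow (p : ℕ) (σ : ℝ) :
    HasDerivAt (fun σ : ℝ => (-σ) ^ p) (-(p : ℝ) * (-σ) ^ (p - 1)) σ := by
  have h := (hasDerivAt_pow p (-σ)).comp σ (hasDerivAt_neg σ)
  refine h.congr_deriv ?_
  ring

lemma hasDerivAt_q0 (ν k : ℕ) (σ : ℝ) : HasDerivAt (q0 ν k) (q1 ν k σ) σ :=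
  hasDerivAt_negpow (ν - k) σ

lemma hasDerivAt_q1 (ν k : ℕ) (σ : ℝ) : HasDerivAt (q1 ν k) (q2 ν k σ) σ := by
  have h := (hasDerivAt_negpow (ν - k - 1) σ).const_mul (-((ν - k : ℕ) : ℝ))
  refine h.congr_deriv ?_
  simp only [q2]
  ring

/-- binomial expansion of the matrix power applied to a vector -/
lemma expand_mulVec {m : ℕ} (A : Matrix (Fin m) (Fin m) ℝ) (s : ℝ) (ν : ℕ)
    (x : Fin m → ℝ) (τ : ℝ) :
    ((A - τ • 1) ^ ν).mulVec x
      = ∑ k ∈ range (ν + 1),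
          (q0 ν k (τ - s) * (ν.choose k : ℝ)) • ((A - s • 1) ^ k).mulVec x := by
  have hM : A - τ • 1 = (A - s • 1) + (-(τ - s)) • (1 : Matrix (Fin m) (Fin m) ℝ) := by
    rw [neg_sub, sub_smul]; abel
  have hc : Commute (A - s • 1) ((-(τ - s)) • (1 : Matrix (Fin m) (Fin m) ℝ)) :=
    (Commute.one_right _).smul_right _
  rw [hM, hc.add_pow]
  have hsum := map_sum (Matrix.mulVec.addMonoidHomLeft x)
    (fun k => (A - s • 1) ^ k * (-(τ - s) • 1) ^ (ν - k) * (ν.choose k : Matrix (Fin m) (Fin m) ℝ))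
    (range (ν + 1))
  simp only [Matrix.mulVec.addMonoidHomLeft] at hsum
  rw [show (∑ m_1 ∈ range (ν + 1), (A - s • 1) ^ m_1 * (-(τ - s) • 1) ^ (ν - m_1) * (ν.choose m_1 : Matrix (Fin m) (Fin m) ℝ)) *ᵥ x = _ from hsum]
  show _ = ∑ k ∈ range (ν + 1), (q0 ν k (τ - s) * (ν.choose k : ℝ)) • ((A - s • 1) ^ k).mulVec x
  refine Finset.sum_congr rfl fun k hk => ?_
  show ((A - s • 1) ^ k * (-(τ - s) • 1) ^ (ν - k) * (ν.choose k : Matrix (Fin m) (Fin m) ℝ)) *ᵥ x = _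
  have h1 : ((-(τ - s)) • (1 : Matrix (Fin m) (Fin m) ℝ)) ^ (ν - k)
      = (-(τ - s)) ^ (ν - k) • (1 : Matrix (Fin m) (Fin m) ℝ) := by
    rw [smul_pow, one_pow]
  have hcast : ((ν.choose k : ℕ) : Matrix (Fin m) (Fin m) ℝ) = (ν.choose k : ℝ) • 1 := by
    rw [Nat.cast_smul_eq_nsmul ℝ (ν.choose k) (1 : Matrix (Fin m) (Fin m) ℝ), nsmul_eq_mul,
      mul_one]
  have h2 : (A - s • 1) ^ k * ((-(τ - s)) • (1:Matrix (Fin m) (Fin m) ℝ)) ^ (ν - k) * (ν.choose k : Matrix (Fin m) (Fin m) ℝ)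
      = (q0 ν k (τ - s) * (ν.choose k : ℝ)) • (A - s • 1) ^ k := by
    rw [h1, hcast]
    simp only [Matrix.mul_smul, Matrix.smul_mul, mul_one, smul_smul, q0]
    rw [mul_comm]
  rw [h2, Matrix.smul_mulVec]

noncomputable def iE' {m : ℕ} : (Fin m → ℝ) ≃ₗ[ℝ] EuclideanSpace ℝ (Fin m) :=
  (WithLp.linearEquiv 2 ℝ (Fin m → ℝ)).symm

lemma vnorm_eq_norm' {m : ℕ} (v : Fin m → ℝ) : vnorm v = ‖iE' v‖ := by
  rw [EuclideanSpace.norm_eq]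
  simp only [vnorm]
  congr 1
  refine Finset.sum_congr rfl fun i _ => ?_
  rw [show ‖iE' v i‖ = |v i| from rfl, sq_abs]

lemma exists_mulVec_bound {m : ℕ} (M : Matrix (Fin m) (Fin m) ℝ) :
    ∃ C : ℝ, 0 < C ∧ ∀ v : Fin m → ℝ, ‖iE' (M.mulVec v)‖ ≤ C * ‖iE' v‖ := by
  let L : EuclideanSpace ℝ (Fin m) →ₗ[ℝ] EuclideanSpace ℝ (Fin m) :=
    (iE'.toLinearMap ∘ₗ M.mulVecLin) ∘ₗ iE'.symm.toLinearMap
  let Lc := LinearMap.toContinuousLinearMap L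
  refine ⟨‖Lc‖ + 1, by positivity, fun v => ?_⟩
  have h1 : Lc (iE' v) = iE' (M.mulVec v) := by
    simp [Lc, L, LinearMap.toContinuousLinearMap]
  have h := Lc.le_opNorm (iE' v)
  rw [h1] at h
  nlinarith [norm_nonneg (iE' v), norm_nonneg (Lc)]


section Gdefs
variable {m : ℕ} (A : Matrix (Fin m) (Fin m) ℝ) (s : ℝ) (ν : ℕ)

/-- coefficient vectors -/
noncomputable def vv (x : Fin m → ℝ) (k : ℕ) : EuclideanSpace ℝ (Fin m) :=
  (ν.choose k : ℝ) • iE' (((A - s • 1) ^ k).mulVec x)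

noncomputable def Gf (x : Fin m → ℝ) (σ : ℝ) : EuclideanSpace ℝ (Fin m) :=
  ∑ k ∈ Finset.range (ν + 1), q0 ν k σ • vv A s ν x k

noncomputable def Gf1 (x : Fin m → ℝ) (σ : ℝ) : EuclideanSpace ℝ (Fin m) :=
  ∑ k ∈ Finset.range (ν + 1), q1 ν k σ • vv A s ν x k

noncomputable def Gf2 (x : Fin m → ℝ) (σ : ℝ) : EuclideanSpace ℝ (Fin m) :=
  ∑ k ∈ Finset.range (ν + 1), q2 ν k σ • vv A s ν x k

lemma Gf_eq (x : Fin m → ℝ) (τ : ℝ) :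
    Gf A s ν x (τ - s) = iE' (((A - τ • 1) ^ ν).mulVec x) := by
  rw [expand_mulVec A s ν x τ, map_sum]
  refine Finset.sum_congr rfl fun k hk => ?_
  rw [_root_.map_smul]
  simp only [vv, smul_smul, mul_comm]

lemma hasDerivAt_Gf (x : Fin m → ℝ) (σ : ℝ) :
    HasDerivAt (Gf A s ν x) (Gf1 A s ν x σ) σ :=
  HasDerivAt.fun_sum fun k _ => (hasDerivAt_q0 ν k σ).smul_const (vv A s ν x k)

lemma hasDerivAt_Gf1 (x : Fin m → ℝ) (σ : ℝ) :
    HasDerivAt (Gf1 A s ν x) (Gf2 A s ν x σ) σ :=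
  HasDerivAt.fun_sum fun k _ => (hasDerivAt_q1 ν k σ).smul_const (vv A s ν x k)

lemma Gf_add (x y : Fin m → ℝ) (σ : ℝ) :
    Gf A s ν (x + y) σ = Gf A s ν x σ + Gf A s ν y σ := by
  simp only [Gf, vv, Matrix.mulVec_add, map_add, smul_add, Finset.sum_add_distrib]

lemma Gf1_add (x y : Fin m → ℝ) (σ : ℝ) :
    Gf1 A s ν (x + y) σ = Gf1 A s ν x σ + Gf1 A s ν y σ := by
  simp only [Gf1, vv, Matrix.mulVec_add, map_add, smul_add, Finset.sum_add_distrib]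

lemma Gf2_add (x y : Fin m → ℝ) (σ : ℝ) :
    Gf2 A s ν (x + y) σ = Gf2 A s ν x σ + Gf2 A s ν y σ := by
  simp only [Gf2, vv, Matrix.mulVec_add, map_add, smul_add, Finset.sum_add_distrib]

lemma Gf_zero_eval (x : Fin m → ℝ) :
    Gf A s ν x 0 = iE' (((A - s • 1) ^ ν).mulVec x) := by
  rw [Gf]
  rw [Finset.sum_eq_single ν]
  · simp [q0, vv]
  · intro k hk hne
    have hk' : k < ν + 1 := Finset.mem_range.mp hk
    have : ν - k ≠ 0 := by omega
    simp [q0, zero_pow this]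
  · intro h; exact absurd (Finset.self_mem_range_succ ν) h

lemma Gf1_zero_eval (x : Fin m → ℝ) (hν : 0 < ν) :
    Gf1 A s ν x 0 = (-(ν : ℝ)) • iE' (((A - s • 1) ^ (ν - 1)).mulVec x) := by
  rw [Gf1]
  rw [Finset.sum_eq_single (ν - 1)]
  · have h1 : ν - (ν - 1) = 1 := by omega
    have h2 : ν.choose (ν - 1) = ν := by
      have := Nat.choose_symm (Nat.sub_le ν 1)
      rw [show ν - (ν-1) = 1 by omega] at this
      rw [← this, Nat.choose_one_right]
    simp [q1, vv, h1, h2, smul_smul]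
  · intro k hk hne
    have hk' : k < ν + 1 := Finset.mem_range.mp hk
    rcases Nat.lt_or_ge k (ν - 1) with h | h
    · have : ν - k - 1 ≠ 0 := by omega
      simp [q1, zero_pow this]
    · have : k = ν := by omega
      subst this
      simp [q1]
  · intro h; exact absurd (Finset.mem_range.mpr (by omega)) h

open scoped RealInnerProductSpace

noncomputable def psi0 (x : Fin m → ℝ) (σ : ℝ) : ℝ := ‖Gf A s ν x σ‖ ^ 2

noncomputable def psi1 (x : Fin m → ℝ) (σ : ℝ) : ℝ := 2 * ⟪Gf1 A s ν x σ, Gf A s ν x σ⟫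

noncomputable def psi2 (x : Fin m → ℝ) (σ : ℝ) : ℝ :=
  2 * ⟪Gf2 A s ν x σ, Gf A s ν x σ⟫ + 2 * ‖Gf1 A s ν x σ‖ ^ 2

lemma hasDerivAt_psi0 (x : Fin m → ℝ) (σ : ℝ) :
    HasDerivAt (psi0 A s ν x) (psi1 A s ν x σ) σ := by
  have h := HasDerivAt.inner ℝ (hasDerivAt_Gf A s ν x σ) (hasDerivAt_Gf A s ν x σ)
  have he : psi0 A s ν x = fun σ => ⟪Gf A s ν x σ, Gf A s ν x σ⟫ := by
    funext t; rw [psi0, real_inner_self_eq_norm_sq]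
  rw [he, psi1]
  refine h.congr_deriv ?_
  rw [real_inner_comm]
  ring

lemma hasDerivAt_psi1 (x : Fin m → ℝ) (σ : ℝ) :
    HasDerivAt (psi1 A s ν x) (psi2 A s ν x σ) σ := by
  have h := (HasDerivAt.inner ℝ (hasDerivAt_Gf1 A s ν x σ) (hasDerivAt_Gf A s ν x σ)).const_mul 2
  have he : psi1 A s ν x = fun σ => 2 * ⟪Gf1 A s ν x σ, Gf A s ν x σ⟫ := rfl
  rw [he]
  refine h.congr_deriv ?_
  rw [psi2,
    show ⟪Gf1 A s ν x σ, Gf1 A s ν x σ⟫ = ‖Gf1 A s ν x σ‖^2 from real_inner_self_eq_norm_sq _]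
  ring

end Gdefs

/-- helper: bound norm of a coefficient-vector sum -/
lemma norm_sum_smul_le {m N : ℕ} (c : ℕ → ℝ) (u : ℕ → EuclideanSpace ℝ (Fin m)) (β : ℝ)
    (b : ℕ → ℝ) (hc : ∀ k ∈ Finset.range N, |c k| ≤ β)
    (hu : ∀ k ∈ Finset.range N, ‖u k‖ ≤ b k) (hβ : 0 ≤ β) :
    ‖∑ k ∈ Finset.range N, c k • u k‖ ≤ β * ∑ k ∈ Finset.range N, b k := by
  calc ‖∑ k ∈ Finset.range N, c k • u k‖ ≤ ∑ k ∈ Finset.range N, ‖c k • u k‖ :=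
        norm_sum_le _ _
    _ ≤ ∑ k ∈ Finset.range N, β * b k := by
        refine Finset.sum_le_sum fun k hk => ?_
        rw [norm_smul]
        have h1 : ‖u k‖ ≤ b k := hu k hk
        have h2 : (0:ℝ) ≤ ‖u k‖ := norm_nonneg _
        have h3 := hc k hk
        have : ‖c k‖ = |c k| := rfl
        rw [this]
        nlinarith [abs_nonneg (c k)]
    _ = β * ∑ k ∈ Finset.range N, b k := by rw [Finset.mul_sum]

lemma abs_q0_le (ν k : ℕ) (σ : ℝ) : |q0 ν k σ| ≤ max 1 |σ| ^ ν := by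
  rw [q0, abs_pow, abs_neg]
  calc |σ| ^ (ν - k) ≤ max 1 |σ| ^ (ν - k) :=
        pow_le_pow_left₀ (abs_nonneg σ) (le_max_right 1 |σ|) _
    _ ≤ max 1 |σ| ^ ν := pow_le_pow_right₀ (le_max_left 1 |σ|) (Nat.sub_le ν k)

lemma abs_q1_le (ν k : ℕ) (σ : ℝ) : |q1 ν k σ| ≤ (ν : ℝ) * max 1 |σ| ^ ν := by
  rw [q1, abs_mul, abs_neg, Nat.abs_cast, abs_pow, abs_neg]
  have h1 : ((ν - k : ℕ) : ℝ) ≤ (ν : ℝ) := Nat.cast_le.mpr (Nat.sub_le ν k)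
  have h2 : |σ| ^ (ν - k - 1) ≤ max 1 |σ| ^ ν :=
    le_trans (pow_le_pow_left₀ (abs_nonneg σ) (le_max_right 1 |σ|) _)
      (pow_le_pow_right₀ (le_max_left 1 |σ|) (by omega))
  have h3 : (0:ℝ) ≤ ((ν - k : ℕ) : ℝ) := Nat.cast_nonneg _
  have h4 : (0:ℝ) ≤ |σ| ^ (ν - k - 1) := by positivity
  nlinarith

lemma abs_q2_le (ν k : ℕ) (σ : ℝ) : |q2 ν k σ| ≤ (ν : ℝ) * (ν : ℝ) * max 1 |σ| ^ ν := by
  rw [q2, abs_mul, abs_mul, Nat.abs_cast, Nat.abs_cast, abs_pow, abs_neg]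
  have h1 : ((ν - k : ℕ) : ℝ) ≤ (ν : ℝ) := Nat.cast_le.mpr (Nat.sub_le ν k)
  have h1' : ((ν - k - 1 : ℕ) : ℝ) ≤ (ν : ℝ) := Nat.cast_le.mpr (by omega)
  have h2 : |σ| ^ (ν - k - 1 - 1) ≤ max 1 |σ| ^ ν :=
    le_trans (pow_le_pow_left₀ (abs_nonneg σ) (le_max_right 1 |σ|) _)
      (pow_le_pow_right₀ (le_max_left 1 |σ|) (by omega))
  calc ((ν - k : ℕ) : ℝ) * ((ν - k - 1 : ℕ) : ℝ) * |σ| ^ (ν - k - 1 - 1)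
      ≤ (ν : ℝ) * (ν : ℝ) * |σ| ^ (ν - k - 1 - 1) := by
        have h4 : (0:ℝ) ≤ |σ| ^ (ν - k - 1 - 1) := by positivity
        have h3 : (0:ℝ) ≤ ((ν - k : ℕ) : ℝ) := Nat.cast_nonneg _
        have h3' : (0:ℝ) ≤ ((ν - k - 1 : ℕ) : ℝ) := Nat.cast_nonneg _
        have h5 : ((ν - k : ℕ) : ℝ) * ((ν - k - 1 : ℕ) : ℝ) ≤ (ν : ℝ) * (ν : ℝ) :=
          mul_le_mul h1 h1' h3' (Nat.cast_nonneg ν)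
        exact mul_le_mul_of_nonneg_right h5 h4
    _ ≤ (ν : ℝ) * (ν : ℝ) * max 1 |σ| ^ ν := by
        have : (0:ℝ) ≤ (ν : ℝ) * (ν : ℝ) := by positivity
        exact mul_le_mul_of_nonneg_left h2 this

lemma abs_q0_sub_le (ν k : ℕ) {σ : ℝ} (h : |σ| ≤ 1) : |q0 ν k σ - q0 ν k 0| ≤ |σ| := by
  rcases Nat.eq_zero_or_pos (ν - k) with h0 | h0
  · simp [q0, h0]
  · have : q0 ν k 0 = 0 := by simp [q0, zero_pow (by omega : ν - k ≠ 0)]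
    rw [this, sub_zero, q0, abs_pow, abs_neg]
    calc |σ| ^ (ν - k) ≤ |σ| ^ 1 := pow_le_pow_of_le_one (abs_nonneg σ) h (by omega)
      _ = |σ| := pow_one _

lemma abs_q1_sub_le (ν k : ℕ) {σ : ℝ} (h : |σ| ≤ 1) : |q1 ν k σ - q1 ν k 0| ≤ (ν:ℝ) * |σ| := by
  rcases Nat.eq_zero_or_pos (ν - k - 1) with h0 | h0
  · simp [q1, h0]
    positivity
  · have : q1 ν k 0 = 0 := by simp [q1, zero_pow (by omega : ν - k - 1 ≠ 0)]
    rw [this, sub_zero, q1, abs_mul, abs_neg, Nat.abs_cast, abs_pow, abs_neg]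
    have h1 : ((ν - k : ℕ) : ℝ) ≤ (ν : ℝ) := Nat.cast_le.mpr (Nat.sub_le ν k)
    have h2 : |σ| ^ (ν - k - 1) ≤ |σ| := by
      calc |σ| ^ (ν - k - 1) ≤ |σ| ^ 1 := pow_le_pow_of_le_one (abs_nonneg σ) h (by omega)
        _ = |σ| := pow_one _
    have h3 : (0:ℝ) ≤ ((ν - k : ℕ) : ℝ) := Nat.cast_nonneg _
    have h4 : (0:ℝ) ≤ |σ| ^ (ν - k - 1) := by positivity
    nlinarith [abs_nonneg σ]

open Polynomial in
lemma nonvanish {m : ℕ} (A : Matrix (Fin m) (Fin m) ℝ) (s : ℝ) (ν : ℕ)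
    (ξ : Fin m → ℝ) (hξ0 : ξ ≠ 0) (hann : ((A - s • 1) ^ ν).mulVec ξ = 0)
    (σ : ℝ) (hσ : σ ≠ 0) : ((A - (s + σ) • 1) ^ ν).mulVec ξ ≠ 0 := by
  intro hcon
  set B := A - s • (1 : Matrix (Fin m) (Fin m) ℝ) with hBdef
  have hB' : A - (s + σ) • (1 : Matrix (Fin m) (Fin m) ℝ) = B - σ • 1 := by
    rw [hBdef, add_smul]; abel
  rw [hB'] at hcon
  have hbase : IsCoprime (X : ℝ[X]) (X - C σ) := by
    refine ⟨C σ⁻¹, -C σ⁻¹, ?_⟩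
    have h1 : σ⁻¹ * σ = 1 := inv_mul_cancel₀ hσ
    calc C σ⁻¹ * X + -C σ⁻¹ * (X - C σ) = C σ⁻¹ * C σ := by ring
      _ = 1 := by rw [← C_mul, h1]; simp
  obtain ⟨a, b, hab⟩ := (hbase.pow : IsCoprime ((X:ℝ[X])^ν) ((X - C σ)^ν))
  have hmap := congrArg (aeval B) hab
  simp only [map_add, _root_.map_mul, map_pow, map_sub, aeval_X, aeval_C,
    _root_.map_one] at hmap
  have halg : algebraMap ℝ (Matrix (Fin m) (Fin m) ℝ) σ = σ • 1 :=
    Algebra.algebraMap_eq_smul_one σ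
  rw [halg] at hmap
  have hξ : ξ = (1 : Matrix (Fin m) (Fin m) ℝ).mulVec ξ := (Matrix.one_mulVec ξ).symm
  rw [← hmap, Matrix.add_mulVec, ← Matrix.mulVec_mulVec, ← Matrix.mulVec_mulVec,
    hann, hcon, Matrix.mulVec_zero, Matrix.mulVec_zero, add_zero] at hξ
  exact hξ0 hξ

section Main
open Finset
open scoped RealInnerProductSpace


lemma arith_div_half {Q ρ : ℝ} (hQ : 0 ≤ Q) (hρ : 0 < ρ) : Q * (ρ/(2*Q+1)) ≤ ρ/2 := by
  rw [mul_div_assoc', div_le_div_iff₀ (by linarith) (by norm_num)]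
  nlinarith

lemma arith_far {G T H p MB sx : ℝ} (e1 : H ≤ G + T) (e3 : H = p * sx) (ht : T ≤ p * MB)
    (h6 : p*(MB+1) ≤ p * sx) (hp1 : 1 ≤ p) : 1 ≤ G := by nlinarith

lemma mul_le_mul4 {a b c d : ℝ} (h1 : a ≤ b) (h2 : c ≤ d) (ha : 0 ≤ a) (hc : 0 ≤ c) :
    a * c ≤ b * d := mul_le_mul h1 h2 hc (le_trans ha h1)

lemma arith_sm {n Mx Cvv σa ea η γ D1 : ℝ} (hn : 0 ≤ n) (hMx : 0 ≤ Mx) (hCvv : 0 ≤ Cvv)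
    (hσ0 : 0 ≤ σa) (hσ : σa ≤ η) (he0 : 0 ≤ ea) (he : ea ≤ η)
    (hD : n*Mx + n*Cvv ≤ D1) (hD1 : 0 < D1) (hγ : η ≤ γ/(2*D1)) :
    (n*σa)*Mx + n*(Cvv*ea) ≤ γ/2 := by
  have hη0 : 0 ≤ η := le_trans hσ0 hσ
  have h1 : η * (2*D1) ≤ γ := by
    have := mul_le_mul_of_nonneg_right hγ (by linarith : (0:ℝ) ≤ 2*D1)
    rwa [div_mul_cancel₀] at this
    linarith
  nlinarith [mul_le_mul hσ (le_refl Mx) hMx hη0, mul_le_mul he (le_refl Cvv) hCvv hη0,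
    mul_nonneg hn hη0, mul_le_mul_of_nonneg_left hD hη0]

lemma arith_gsm {Mx Cvv σa ea η γ8 D1 : ℝ} (hMx : 0 ≤ Mx) (hCvv : 0 ≤ Cvv)
    (hσ0 : 0 ≤ σa) (hσ : σa ≤ η) (he0 : 0 ≤ ea) (he : ea ≤ η)
    (hD : Mx + Cvv ≤ D1) (hD1 : 0 < D1) (hγ : η ≤ γ8/D1) :
    σa*Mx + Cvv*ea ≤ γ8 := by
  have hη0 : 0 ≤ η := le_trans hσ0 hσ
  have h1 : η * D1 ≤ γ8 := by
    have := mul_le_mul_of_nonneg_right hγ hD1.le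
    rwa [div_mul_cancel₀] at this
    linarith
  nlinarith [mul_le_mul hσ (le_refl Mx) hMx hη0, mul_le_mul he (le_refl Cvv) hCvv hη0,
    mul_le_mul_of_nonneg_left hD hη0]

lemma arith_psi2 {γ E2 I N : ℝ} (hγ : 0 < γ) (hE2 : 0 ≤ E2)
    (hI : |I| ≤ E2 * (γ^2/(8*(E2+1)))) (hN : γ/2 ≤ N) : γ^2/4 ≤ 2*I + 2*N^2 := by
  have h1 : E2 * (γ^2/(8*(E2+1))) ≤ γ^2/8 := by
    rw [mul_div_assoc', div_le_div_iff₀ (by linarith) (by norm_num)]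
    nlinarith [sq_nonneg γ]
  have h2 : (γ/2)^2 ≤ N^2 := pow_le_pow_left₀ (by positivity) hN 2
  have h3 : -I ≤ |I| := neg_le_abs I
  nlinarith

lemma arith_mvt {c2 sm p0 C4 ne : ℝ} (hc2 : 0 < c2) (hsm : 0 < sm)
    (h1 : c2 * sm ≤ -p0) (hp0 : |p0| ≤ C4 * ne) (hne : 0 ≤ ne) :
    sm ≤ (C4/c2 + 1) * ne := by
  have h2 : -p0 ≤ |p0| := neg_le_abs p0
  have h3 : c2 * sm ≤ C4 * ne := by linarith
  have h4 : C4 * ne = c2 * ((C4/c2) * ne) := by field_simp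
  have h5 : sm ≤ (C4/c2) * ne := by nlinarith
  nlinarith

lemma arith_L1 {K ne ε : ℝ} (hK : 0 ≤ K) (h0 : 0 ≤ ne) (hne : ne ≤ ε) :
    (K*ne)^2 ≤ (K^2*ε + 1)*ne := by
  nlinarith [mul_nonneg (mul_nonneg (sq_nonneg K) h0) (sub_nonneg.mpr hne)]

set_option maxHeartbeats 2000000 in
/-- For a real eigenvalue s of A and nonzero ξ ∈ GE_s(A) of order ν, with
φ_x(τ) = ‖(A − τI)^ν x‖², there exist ε, L₀, L₁ > 0 such that for every x with ‖x − ξ‖ ≤ ε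
the function φ_x attains its global minimum at a unique point τ_x, with
|τ_x − s| ≤ L₀‖x − ξ‖ and φ_x(τ_x) ≤ L₁‖x − ξ‖. -/
theorem stmt18 {m : ℕ} (A : Matrix (Fin m) (Fin m) ℝ) (s : ℝ)
    (hs : s ∈ spectrum ℝ A)
    (ξ : Fin m → ℝ) (hmem : ξ ∈ GEsub A s) (hξ0 : ξ ≠ 0)
    (ν : ℕ) (hν : 0 < ν) (hann : ((A - s • 1) ^ ν).mulVec ξ = 0)
    (hmin : ∀ k : ℕ, 0 < k → ((A - s • 1) ^ k).mulVec ξ = 0 → ν ≤ k) :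
    ∃ ε : ℝ, 0 < ε ∧ ∃ L₀ : ℝ, 0 < L₀ ∧ ∃ L₁ : ℝ, 0 < L₁ ∧
      ∀ x : Fin m → ℝ, vnorm (x - ξ) ≤ ε →
        ∃ τx : ℝ,
          (∀ τ : ℝ, vnorm (((A - τx • 1) ^ ν).mulVec x) ^ 2
            ≤ vnorm (((A - τ • 1) ^ ν).mulVec x) ^ 2) ∧
          (∀ τ' : ℝ, (∀ τ : ℝ, vnorm (((A - τ' • 1) ^ ν).mulVec x) ^ 2
            ≤ vnorm (((A - τ • 1) ^ ν).mulVec x) ^ 2) → τ' = τx) ∧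
          |τx - s| ≤ L₀ * vnorm (x - ξ) ∧
          vnorm (((A - τx • 1) ^ ν).mulVec x) ^ 2 ≤ L₁ * vnorm (x - ξ) := by
  classical
  set B : Matrix (Fin m) (Fin m) ℝ := A - s • 1 with hBdef
  -- ξ has positive norm
  have hξE : (0:ℝ) < ‖iE' ξ‖ := by
    rw [norm_pos_iff]
    simpa using hξ0
  -- the key nonzero vector
  have hwvec : (B ^ (ν-1)).mulVec ξ ≠ 0 := by
    rcases Nat.lt_or_ge 1 ν with h1 | h1
    · intro hcon
      have := hmin (ν - 1) (by omega) hcon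
      omega
    · have hν1 : ν = 1 := by omega
      simpa [hν1] using hξ0
  set γ : ℝ := (ν : ℝ) * ‖iE' ((B ^ (ν-1)).mulVec ξ)‖ with hγdef
  have hγ : 0 < γ := by
    apply mul_pos (by exact_mod_cast hν)
    rw [norm_pos_iff]
    simpa using hwvec
  -- per-power operator bounds
  choose Ck hCkpos hCkle using fun k : ℕ => exists_mulVec_bound (B ^ k)
  set Cv : ℝ := ∑ k ∈ range (ν+1), (ν.choose k : ℝ) * Ck k with hCvdef
  have hCv : 0 < Cv := by
    apply Finset.sum_pos
    · intro k hk
      have hk' : k ≤ ν := by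
        have := Finset.mem_range.mp hk; omega
      have : 0 < ν.choose k := Nat.choose_pos hk'
      have : (0:ℝ) < (ν.choose k : ℝ) := by exact_mod_cast this
      exact mul_pos this (hCkpos k)
    · exact ⟨0, Finset.mem_range.mpr (by omega)⟩
  have hvvle : ∀ (y : Fin m → ℝ), ∀ k ∈ range (ν+1),
      ‖vv A s ν y k‖ ≤ ((ν.choose k : ℝ) * Ck k) * ‖iE' y‖ := by
    intro y k _
    rw [vv, norm_smul]
    have h1 := hCkle k y
    have h2 : ‖(ν.choose k : ℝ)‖ = (ν.choose k : ℝ) := by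
      rw [Real.norm_eq_abs, abs_of_nonneg (Nat.cast_nonneg _)]
    rw [h2, mul_assoc]
    exact mul_le_mul_of_nonneg_left h1 (Nat.cast_nonneg _)
  -- the master bound for coefficient sums
  have key : ∀ (c : ℕ → ℝ) (β : ℝ), 0 ≤ β → (∀ k ∈ range (ν+1), |c k| ≤ β) →
      ∀ y : Fin m → ℝ, ‖∑ k ∈ range (ν+1), c k • vv A s ν y k‖ ≤ β * (Cv * ‖iE' y‖) := by
    intro c β hβ hc y
    have h := norm_sum_smul_le c (vv A s ν y) β
      (fun k => ((ν.choose k : ℝ) * Ck k) * ‖iE' y‖) hc (hvvle y) hβ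
    calc ‖∑ k ∈ range (ν+1), c k • vv A s ν y k‖
        ≤ β * ∑ k ∈ range (ν+1), ((ν.choose k : ℝ) * Ck k) * ‖iE' y‖ := h
      _ = β * (Cv * ‖iE' y‖) := by rw [← Finset.sum_mul]
  -- instantiated bounds
  have hGbd : ∀ (y : Fin m → ℝ) (σ : ℝ),
      ‖Gf A s ν y σ‖ ≤ max 1 |σ| ^ ν * (Cv * ‖iE' y‖) :=
    fun y σ => key (fun k => q0 ν k σ) _ (by positivity) (fun k _ => abs_q0_le ν k σ) y
  have hG1bd : ∀ (y : Fin m → ℝ) (σ : ℝ),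
      ‖Gf1 A s ν y σ‖ ≤ ((ν:ℝ) * max 1 |σ| ^ ν) * (Cv * ‖iE' y‖) :=
    fun y σ => key (fun k => q1 ν k σ) _ (by positivity) (fun k _ => abs_q1_le ν k σ) y
  have hG2bd : ∀ (y : Fin m → ℝ) (σ : ℝ),
      ‖Gf2 A s ν y σ‖ ≤ ((ν:ℝ) * (ν:ℝ) * max 1 |σ| ^ ν) * (Cv * ‖iE' y‖) :=
    fun y σ => key (fun k => q2 ν k σ) _ (by positivity) (fun k _ => abs_q2_le ν k σ) y
  have hmax1 : ∀ σ : ℝ, |σ| ≤ 1 → max 1 |σ| = 1 := fun σ h => max_eq_left h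
  -- difference bounds
  have hGdiff : ∀ (y : Fin m → ℝ) (σ : ℝ),
      Gf A s ν y σ - Gf A s ν y 0 = ∑ k ∈ range (ν+1), (q0 ν k σ - q0 ν k 0) • vv A s ν y k := by
    intro y σ
    rw [Gf, Gf, ← Finset.sum_sub_distrib]
    exact Finset.sum_congr rfl fun k _ => (sub_smul _ _ _).symm
  have hG1diff : ∀ (y : Fin m → ℝ) (σ : ℝ),
      Gf1 A s ν y σ - Gf1 A s ν y 0 = ∑ k ∈ range (ν+1), (q1 ν k σ - q1 ν k 0) • vv A s ν y k := by
    intro y σ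
    rw [Gf1, Gf1, ← Finset.sum_sub_distrib]
    exact Finset.sum_congr rfl fun k _ => (sub_smul _ _ _).symm
  have hGdiffbd : ∀ (y : Fin m → ℝ) (σ : ℝ), |σ| ≤ 1 →
      ‖Gf A s ν y σ - Gf A s ν y 0‖ ≤ |σ| * (Cv * ‖iE' y‖) := by
    intro y σ hσ
    rw [hGdiff]
    exact key _ _ (abs_nonneg σ) (fun k _ => abs_q0_sub_le ν k hσ) y
  have hG1diffbd : ∀ (y : Fin m → ℝ) (σ : ℝ), |σ| ≤ 1 →
      ‖Gf1 A s ν y σ - Gf1 A s ν y 0‖ ≤ ((ν:ℝ) * |σ|) * (Cv * ‖iE' y‖) := by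
    intro y σ hσ
    rw [hG1diff]
    exact key _ _ (by positivity) (fun k _ => abs_q1_sub_le ν k hσ) y
  -- evaluations
  have hGfξ0 : Gf A s ν ξ 0 = 0 := by
    rw [Gf_zero_eval, ← hBdef, hann, map_zero]
  have hGf1ξ0 : ‖Gf1 A s ν ξ 0‖ = γ := by
    rw [Gf1_zero_eval A s ν ξ hν, norm_smul, hγdef, ← hBdef, norm_neg, Real.norm_natCast]
  -- key constants
  set Mξ : ℝ := Cv * ‖iE' ξ‖ with hMξdef
  have hMξ : 0 < Mξ := mul_pos hCv hξE
  set D1 : ℝ := (ν:ℝ) * Mξ + (ν:ℝ) * Cv + Mξ + Cv + 1 with hD1def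
  have hD1 : 0 < D1 := by
    have h1 : (0:ℝ) ≤ (ν:ℝ) * Mξ := mul_nonneg (Nat.cast_nonneg ν) hMξ.le
    have h2 : (0:ℝ) ≤ (ν:ℝ) * Cv := mul_nonneg (Nat.cast_nonneg ν) hCv.le
    rw [hD1def]; nlinarith
  set E2 : ℝ := (ν:ℝ) * (ν:ℝ) * (Mξ + Cv) with hE2def
  have hE2 : 0 ≤ E2 :=
    mul_nonneg (mul_nonneg (Nat.cast_nonneg ν) (Nat.cast_nonneg ν)) (by linarith)
  set c₂ : ℝ := γ^2 / 4 with hc₂def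
  have hc₂ : 0 < c₂ := div_pos (pow_pos hγ 2) (by norm_num)
  set η : ℝ := min 1 (min (γ/(2*D1)) (γ^2/(8*(E2+1)*D1))) with hηdef
  have hη : 0 < η := by
    apply lt_min one_pos
    refine lt_min (div_pos hγ (by linarith)) (div_pos (pow_pos hγ 2) ?_)
    have h1 : (0:ℝ) < 8 * (E2 + 1) := by linarith
    exact mul_pos h1 hD1
  have hη1 : η ≤ 1 := min_le_left _ _
  have heη1 : η ≤ γ/(2*D1) := le_trans (min_le_right _ _) (min_le_left _ _)
  have heη2 : η ≤ γ^2/(8*(E2+1)*D1) := le_trans (min_le_right _ _) (min_le_right _ _)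
  set δ : ℝ := η with hδdef
  have hδ : 0 < δ := hη
  set K : ℝ := Ck ν with hKdef
  have hK : 0 < K := hCkpos ν
  set MB : ℝ := Mξ + Cv with hMBdef
  set h0 : ℝ := ‖iE' ξ‖ / 2 with hh0def
  have hh0 : 0 < h0 := by positivity
  set R₀ : ℝ := max 1 ((MB + 1)/h0) with hR₀def
  have hR₀1 : 1 ≤ R₀ := le_max_left _ _
  have hR₀ : 0 < R₀ := lt_of_lt_of_le one_pos hR₀1
  have hδR₀ : δ ≤ R₀ := le_trans (le_trans hη1 (le_refl 1)) hR₀1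
  -- continuity of the G functions
  have hdiffG : ∀ x : Fin m → ℝ, Differentiable ℝ (Gf A s ν x) :=
    fun x σ => (hasDerivAt_Gf A s ν x σ).differentiableAt
  have hcontG : ∀ x : Fin m → ℝ, Continuous (fun σ => ‖Gf A s ν x σ‖) :=
    fun x => (hdiffG x).continuous.norm
  -- nonvanishing on the annulus
  have hnv : ∀ σ : ℝ, σ ≠ 0 → Gf A s ν ξ σ ≠ 0 := by
    intro σ hσ
    have h1 : Gf A s ν ξ σ = iE' (((A - (s + σ) • 1) ^ ν).mulVec ξ) := by
      have := Gf_eq A s ν ξ (s + σ)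
      rwa [add_sub_cancel_left] at this
    rw [h1]
    intro hcon
    apply nonvanish A s ν ξ hξ0 (by rw [← hBdef]; exact hann) σ hσ
    have : iE' (((A - (s + σ) • 1) ^ ν).mulVec ξ) = iE' 0 := by rw [hcon, map_zero]
    exact iE'.injective this
  -- minima on the two compact annulus pieces
  obtain ⟨σ₁, hσ₁mem, hσ₁min⟩ := (isCompact_Icc (a := δ) (b := R₀)).exists_isMinOn
    ⟨δ, Set.left_mem_Icc.mpr hδR₀⟩ (hcontG ξ).continuousOn
  obtain ⟨σ₂, hσ₂mem, hσ₂min⟩ := (isCompact_Icc (a := -R₀) (b := -δ)).exists_isMinOn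
    ⟨-δ, Set.right_mem_Icc.mpr (by linarith)⟩ (hcontG ξ).continuousOn
  set ρ : ℝ := min ‖Gf A s ν ξ σ₁‖ ‖Gf A s ν ξ σ₂‖ with hρdef
  have hρ : 0 < ρ := by
    apply lt_min
    · rw [norm_pos_iff]
      exact hnv σ₁ (by rcases hσ₁mem with ⟨h1, _⟩; intro h; rw [h] at h1; linarith)
    · rw [norm_pos_iff]
      exact hnv σ₂ (by rcases hσ₂mem with ⟨_, h2⟩; intro h; rw [h] at h2; linarith)
  have hannulus : ∀ σ : ℝ, δ ≤ |σ| → |σ| ≤ R₀ → ρ ≤ ‖Gf A s ν ξ σ‖ := by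
    intro σ h1 h2
    rcases le_or_gt 0 σ with hsgn | hsgn
    · rw [abs_of_nonneg hsgn] at h1 h2
      exact le_trans (min_le_left _ _) (hσ₁min ⟨h1, h2⟩)
    · rw [abs_of_neg hsgn] at h1 h2
      exact le_trans (min_le_right _ _) (hσ₂min ⟨by linarith, by linarith⟩)
  set LB : ℝ := min (ρ/2) 1 with hLBdef
  have hLB : 0 < LB := lt_min (half_pos hρ) one_pos
  -- choice of ε
  set ε : ℝ := min (min η h0) (min (ρ/(2*(R₀^ν * Cv) + 1)) (LB/(2*K))) with hεdef
  have hε : 0 < ε := by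
    apply lt_min (lt_min hη hh0)
    have hd : (0:ℝ) < 2*(R₀^ν * Cv) + 1 := by
      have : (0:ℝ) ≤ R₀^ν * Cv := mul_nonneg (pow_nonneg hR₀.le ν) hCv.le
      linarith
    exact lt_min (div_pos hρ hd) (div_pos hLB (by linarith))
  have hεη : ε ≤ η := le_trans (min_le_left _ _) (min_le_left _ _)
  have hεh0 : ε ≤ h0 := le_trans (min_le_left _ _) (min_le_right _ _)
  have hερ : ε ≤ ρ/(2*(R₀^ν * Cv) + 1) := le_trans (min_le_right _ _) (min_le_left _ _)
  have hεK : ε ≤ LB/(2*K) := le_trans (min_le_right _ _) (min_le_right _ _)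
  have hε1 : ε ≤ 1 := le_trans hεη hη1
  -- remaining constants
  set C₄ : ℝ := 2 * (γ + (ν:ℝ) * Cv) * K with hC₄def
  have hC₄ : 0 < C₄ := by
    have h1 : (0:ℝ) ≤ (ν:ℝ) * Cv := mul_nonneg (Nat.cast_nonneg ν) hCv.le
    have h2 : (0:ℝ) < γ + (ν:ℝ) * Cv := by linarith
    rw [hC₄def]; nlinarith
  set L₀ : ℝ := C₄ / c₂ + 1 with hL₀def
  have hL₀ : 0 < L₀ := add_pos_of_nonneg_of_pos (div_nonneg hC₄.le hc₂.le) one_pos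
  set L₁ : ℝ := K^2 * ε + 1 with hL₁def
  have hL₁ : 0 < L₁ :=
    add_pos_of_nonneg_of_pos (mul_nonneg (pow_nonneg hK.le 2) hε.le) one_pos
  refine ⟨ε, hε, L₀, hL₀, L₁, hL₁, ?_⟩
  intro x hxε
  set e : Fin m → ℝ := x - ξ with hedef
  have hxe : x = ξ + e := by rw [hedef]; abel
  have hnev : vnorm (x - ξ) = ‖iE' e‖ := by rw [vnorm_eq_norm', hedef]
  have hee : ‖iE' e‖ ≤ ε := by rw [← hnev]; exact hxε
  have hee1 : ‖iE' e‖ ≤ 1 := le_trans hee hε1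
  have heeη : ‖iE' e‖ ≤ η := le_trans hee hεη
  have hle0 : (0:ℝ) ≤ ‖iE' e‖ := norm_nonneg _
  have hGx : ∀ σ, Gf A s ν x σ = Gf A s ν ξ σ + Gf A s ν e σ := by
    intro σ; rw [hxe, Gf_add]
  have hG1x : ∀ σ, Gf1 A s ν x σ = Gf1 A s ν ξ σ + Gf1 A s ν e σ := by
    intro σ; rw [hxe, Gf1_add]
  have hGx0 : Gf A s ν x 0 = iE' ((B ^ ν).mulVec e) := by
    rw [hGx 0, hGfξ0, zero_add, Gf_zero_eval, hBdef]
  have hGx0bd : ‖Gf A s ν x 0‖ ≤ K * ‖iE' e‖ := by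
    rw [hGx0, hKdef]; exact hCkle ν e
  set ψ : ℝ → ℝ := psi0 A s ν x with hψdef
  have hbridge : ∀ τ : ℝ, vnorm (((A - τ • 1) ^ ν).mulVec x) ^ 2 = ψ (τ - s) := by
    intro τ; rw [vnorm_eq_norm', hψdef, psi0, Gf_eq]
  have hψval : ∀ σ, ψ σ = ‖Gf A s ν x σ‖ ^ 2 := fun σ => rfl
  have hψdiff : Differentiable ℝ ψ := fun σ => (hasDerivAt_psi0 A s ν x σ).differentiableAt
  have hψcont : Continuous ψ := hψdiff.continuous
  -- ======  lower bound for ‖Gf x σ‖ outside (-δ, δ)  ======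
  have hiEx : iE' x = iE' ξ + iE' e := by rw [hxe, map_add]
  have hxnub : ‖iE' x‖ ≤ ‖iE' ξ‖ + 1 := by
    rw [hiEx]
    calc ‖iE' ξ + iE' e‖ ≤ ‖iE' ξ‖ + ‖iE' e‖ := norm_add_le _ _
      _ ≤ ‖iE' ξ‖ + 1 := by linarith
  have hxnlb : h0 ≤ ‖iE' x‖ := by
    have h1 : ‖iE' ξ‖ ≤ ‖iE' x‖ + ‖iE' e‖ := by
      rw [hiEx]
      calc ‖iE' ξ‖ = ‖(iE' ξ + iE' e) - iE' e‖ := by rw [add_sub_cancel_right]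
        _ ≤ ‖iE' ξ + iE' e‖ + ‖iE' e‖ := norm_sub_le _ _
    have h2 : ‖iE' e‖ ≤ h0 := le_trans hee hεh0
    rw [hh0def] at h2 ⊢
    linarith
  have hGxout : ∀ σ : ℝ, δ ≤ |σ| → LB ≤ ‖Gf A s ν x σ‖ := by
    intro σ hσδ
    rcases le_or_gt |σ| R₀ with hcase | hcase
    · -- annulus case
      have hρle : ρ ≤ ‖Gf A s ν ξ σ‖ := hannulus σ hσδ hcase
      have hGe : ‖Gf A s ν e σ‖ ≤ R₀^ν * Cv * ‖iE' e‖ := by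
        have h1 := hGbd e σ
        have h2 : max 1 |σ| ^ ν ≤ R₀ ^ ν :=
          pow_le_pow_left₀ (le_max_of_le_left zero_le_one) (max_le hR₀1 hcase) ν
        calc ‖Gf A s ν e σ‖ ≤ max 1 |σ| ^ ν * (Cv * ‖iE' e‖) := h1
          _ ≤ R₀^ν * (Cv * ‖iE' e‖) :=
              mul_le_mul_of_nonneg_right h2 (mul_nonneg hCv.le hle0)
          _ = R₀^ν * Cv * ‖iE' e‖ := by ring
      have hsub : ‖Gf A s ν ξ σ‖ ≤ ‖Gf A s ν x σ‖ + ‖Gf A s ν e σ‖ := by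
        have : Gf A s ν ξ σ = Gf A s ν x σ - Gf A s ν e σ := by rw [hGx σ]; abel
        rw [this]; exact norm_sub_le _ _
      have hQ0 : (0:ℝ) ≤ R₀^ν * Cv := mul_nonneg (pow_nonneg hR₀.le ν) hCv.le
      have hQε : R₀^ν * Cv * ‖iE' e‖ ≤ ρ / 2 := by
        have h1 : R₀^ν * Cv * ‖iE' e‖ ≤ R₀^ν * Cv * ε :=
          mul_le_mul_of_nonneg_left hee hQ0
        have h2 : R₀^ν * Cv * ε ≤ R₀^ν * Cv * (ρ/(2*(R₀^ν * Cv) + 1)) :=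
          mul_le_mul_of_nonneg_left hερ hQ0
        have h3 : R₀^ν * Cv * (ρ/(2*(R₀^ν * Cv) + 1)) ≤ ρ / 2 := arith_div_half hQ0 hρ
        linarith only [h1, h2, h3]
      calc LB ≤ ρ/2 := min_le_left _ _
        _ ≤ ‖Gf A s ν x σ‖ := by linarith only [hρle, hsub, hGe, hQε]
    · -- far case
      have h1σ : 1 ≤ |σ| := le_trans hR₀1 hcase.le
      have hpeel : Gf A s ν x σ
          = (∑ k ∈ range ν, q0 ν (k+1) σ • vv A s ν x (k+1)) + q0 ν 0 σ • vv A s ν x 0 := by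
        rw [Gf, Finset.sum_range_succ']
      have hvv0 : vv A s ν x 0 = iE' x := by
        rw [vv]; simp [Matrix.one_mulVec]
      have hheadval : ‖q0 ν 0 σ • vv A s ν x 0‖ = |σ|^ν * ‖iE' x‖ := by
        rw [norm_smul, hvv0, Real.norm_eq_abs, q0, Nat.sub_zero, abs_pow, abs_neg]
      set p : ℝ := |σ|^(ν-1) with hpdef
      have hp1 : (1:ℝ) ≤ p := by
        rw [hpdef]
        calc (1:ℝ) = 1^(ν-1) := (one_pow _).symm
          _ ≤ |σ|^(ν-1) := pow_le_pow_left₀ zero_le_one h1σ _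
      have htail : ‖∑ k ∈ range ν, q0 ν (k+1) σ • vv A s ν x (k+1)‖
          ≤ p * (Cv * ‖iE' x‖) := by
        calc ‖∑ k ∈ range ν, q0 ν (k+1) σ • vv A s ν x (k+1)‖
            ≤ ∑ k ∈ range ν, ‖q0 ν (k+1) σ • vv A s ν x (k+1)‖ := norm_sum_le _ _
          _ ≤ ∑ k ∈ range ν, p * (((ν.choose (k+1) : ℝ) * Ck (k+1)) * ‖iE' x‖) := by
              refine Finset.sum_le_sum fun k hk => ?_
              rw [norm_smul, Real.norm_eq_abs]
              have hq : |q0 ν (k+1) σ| ≤ p := by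
                rw [q0, abs_pow, abs_neg, hpdef]
                exact pow_le_pow_right₀ h1σ (by omega)
              have hv := hvvle x (k+1) (Finset.mem_range.mpr (by
                have := Finset.mem_range.mp hk; omega))
              exact mul_le_mul4 hq hv (abs_nonneg _) (norm_nonneg _)
          _ = p * ∑ k ∈ range ν, (((ν.choose (k+1) : ℝ) * Ck (k+1)) * ‖iE' x‖) := by
              rw [Finset.mul_sum]
          _ ≤ p * (Cv * ‖iE' x‖) := by
              have hples : (0:ℝ) ≤ p := le_trans zero_le_one hp1
              refine mul_le_mul_of_nonneg_left ?_ hples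
              have hsum : ∑ k ∈ range (ν+1), (((ν.choose k : ℝ) * Ck k) * ‖iE' x‖)
                  = (∑ k ∈ range ν, (((ν.choose (k+1) : ℝ) * Ck (k+1)) * ‖iE' x‖))
                    + ((ν.choose 0 : ℝ) * Ck 0) * ‖iE' x‖ := Finset.sum_range_succ' _ _
              have hterm0 : (0:ℝ) ≤ ((ν.choose 0 : ℝ) * Ck 0) * ‖iE' x‖ :=
                mul_nonneg (mul_nonneg (Nat.cast_nonneg _) (hCkpos 0).le) (norm_nonneg _)
              have hCveq : ∑ k ∈ range (ν+1), (((ν.choose k : ℝ) * Ck k) * ‖iE' x‖)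
                  = Cv * ‖iE' x‖ := by rw [← Finset.sum_mul]
              linarith only [hsum, hterm0, hCveq]
      have hMBle : Cv * ‖iE' x‖ ≤ MB := by
        rw [hMBdef, hMξdef]
        have := mul_le_mul_of_nonneg_left hxnub hCv.le
        linarith only [this]
      have e4 : MB + 1 ≤ |σ| * ‖iE' x‖ := by
        have hR₀h : MB + 1 ≤ R₀ * h0 := by
          rw [hR₀def]
          have hle : (MB + 1)/h0 ≤ max 1 ((MB + 1)/h0) := le_max_right _ _
          calc MB + 1 = ((MB + 1)/h0) * h0 := by field_simp
            _ ≤ max 1 ((MB + 1)/h0) * h0 := mul_le_mul_of_nonneg_right hle hh0.le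
        calc MB + 1 ≤ R₀ * h0 := hR₀h
          _ ≤ |σ| * ‖iE' x‖ := mul_le_mul hcase.le hxnlb hh0.le (abs_nonneg σ)
      have e1 : ‖q0 ν 0 σ • vv A s ν x 0‖
          ≤ ‖Gf A s ν x σ‖ + ‖∑ k ∈ range ν, q0 ν (k+1) σ • vv A s ν x (k+1)‖ := by
        have hq : q0 ν 0 σ • vv A s ν x 0
            = Gf A s ν x σ - ∑ k ∈ range ν, q0 ν (k+1) σ • vv A s ν x (k+1) := by
          rw [hpeel]; abel
        rw [hq]; exact norm_sub_le _ _
      have e3 : ‖q0 ν 0 σ • vv A s ν x 0‖ = p * (|σ| * ‖iE' x‖) := by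
        rw [hheadval, hpdef]
        rw [show |σ|^ν = |σ|^(ν-1) * |σ| by rw [← pow_succ, show ν - 1 + 1 = ν by omega]]
        ring
      have htail' : ‖∑ k ∈ range ν, q0 ν (k+1) σ • vv A s ν x (k+1)‖ ≤ p * MB :=
        le_trans htail (mul_le_mul_of_nonneg_left hMBle (le_trans zero_le_one hp1))
      have h6 : p * (MB + 1) ≤ p * (|σ| * ‖iE' x‖) :=
        mul_le_mul_of_nonneg_left e4 (le_trans zero_le_one hp1)
      exact le_trans (min_le_right _ _) (arith_far e1 e3 htail' h6 hp1)
  have hψ0bd : ψ 0 ≤ (K * ‖iE' e‖)^2 := by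
    rw [hψval 0]
    exact pow_le_pow_left₀ (norm_nonneg _) hGx0bd 2
  have hKεLB : K * ‖iE' e‖ < LB := by
    have h1 : K * ‖iE' e‖ ≤ K * ε := mul_le_mul_of_nonneg_left hee hK.le
    have h2 : K * ε ≤ K * (LB/(2*K)) := mul_le_mul_of_nonneg_left hεK hK.le
    have h3 : K * (LB/(2*K)) = LB/2 := by field_simp
    linarith only [h1, h2, h3, hLB]
  have hout : ∀ σ : ℝ, δ ≤ |σ| → ψ 0 < ψ σ := by
    intro σ hσδ
    have h1 := hGxout σ hσδ
    have h2 : (K * ‖iE' e‖)^2 < LB^2 := by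
      apply pow_lt_pow_left₀ hKεLB (mul_nonneg hK.le hle0)
      norm_num
    have h3 : LB^2 ≤ ‖Gf A s ν x σ‖^2 := pow_le_pow_left₀ hLB.le h1 2
    rw [hψval σ]
    linarith only [hψ0bd, h2, h3]
  -- ====== second derivative lower bound on [-δ, δ] ======
  have hψ2lb : ∀ σ : ℝ, |σ| ≤ δ → c₂ ≤ psi2 A s ν x σ := by
    intro σ hσδ
    have hσ1 : |σ| ≤ 1 := le_trans hσδ hη1
    have hσ0 : (0:ℝ) ≤ |σ| := abs_nonneg σ
    have hm1 : max 1 |σ| = 1 := hmax1 σ hσ1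
    have hb1 : ‖Gf1 A s ν ξ σ - Gf1 A s ν ξ 0‖ ≤ ((ν:ℝ) * |σ|) * Mξ := by
      rw [hMξdef]; exact hG1diffbd ξ σ hσ1
    have hb2 : ‖Gf1 A s ν e σ‖ ≤ (ν:ℝ) * (Cv * ‖iE' e‖) := by
      have h := hG1bd e σ
      rwa [hm1, one_pow, mul_one] at h
    have hlow : γ ≤ ‖Gf1 A s ν x σ‖ + ‖Gf1 A s ν ξ σ - Gf1 A s ν ξ 0‖
        + ‖Gf1 A s ν e σ‖ := by
      have hdec : Gf1 A s ν ξ 0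
          = Gf1 A s ν x σ - (Gf1 A s ν ξ σ - Gf1 A s ν ξ 0) - Gf1 A s ν e σ := by
        rw [hG1x σ]; abel
      calc γ = ‖Gf1 A s ν ξ 0‖ := hGf1ξ0.symm
        _ = ‖Gf1 A s ν x σ - (Gf1 A s ν ξ σ - Gf1 A s ν ξ 0) - Gf1 A s ν e σ‖ := by
            rw [← hdec]
        _ ≤ ‖Gf1 A s ν x σ - (Gf1 A s ν ξ σ - Gf1 A s ν ξ 0)‖ + ‖Gf1 A s ν e σ‖ :=
            norm_sub_le _ _
        _ ≤ ‖Gf1 A s ν x σ‖ + ‖Gf1 A s ν ξ σ - Gf1 A s ν ξ 0‖ + ‖Gf1 A s ν e σ‖ := by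
            have := norm_sub_le (Gf1 A s ν x σ) (Gf1 A s ν ξ σ - Gf1 A s ν ξ 0)
            linarith only [this]
    have hsm : ((ν:ℝ) * |σ|) * Mξ + (ν:ℝ) * (Cv * ‖iE' e‖) ≤ γ/2 := by
      refine arith_sm (Nat.cast_nonneg ν) hMξ.le hCv.le hσ0 hσδ hle0 heeη ?_ hD1 heη1
      rw [hD1def]
      have h1 : (0:ℝ) ≤ Mξ + Cv + 1 := by linarith only [hMξ, hCv]
      linarith only [h1]
    have hG1low : γ/2 ≤ ‖Gf1 A s ν x σ‖ := by linarith only [hlow, hsm, hb1, hb2]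
    have hGsmall : ‖Gf A s ν x σ‖ ≤ γ^2/(8*(E2+1)) := by
      have hg1 : ‖Gf A s ν ξ σ‖ ≤ |σ| * Mξ := by
        have h := hGdiffbd ξ σ hσ1
        rw [hGfξ0, sub_zero] at h
        rw [hMξdef]; exact h
      have hg2 : ‖Gf A s ν e σ‖ ≤ Cv * ‖iE' e‖ := by
        have h := hGbd e σ
        rwa [hm1, one_pow, one_mul] at h
      have hg3 : ‖Gf A s ν x σ‖ ≤ |σ| * Mξ + Cv * ‖iE' e‖ := by
        rw [hGx σ]
        calc ‖Gf A s ν ξ σ + Gf A s ν e σ‖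
            ≤ ‖Gf A s ν ξ σ‖ + ‖Gf A s ν e σ‖ := norm_add_le _ _
          _ ≤ |σ| * Mξ + Cv * ‖iE' e‖ := by linarith only [hg1, hg2]
      have hg4 : |σ| * Mξ + Cv * ‖iE' e‖ ≤ γ^2/(8*(E2+1)) := by
        refine arith_gsm hMξ.le hCv.le hσ0 hσδ hle0 heeη ?_ hD1 ?_
        · rw [hD1def]
          have h1 : (0:ℝ) ≤ (ν:ℝ) * Mξ := mul_nonneg (Nat.cast_nonneg ν) hMξ.le
          have h2 : (0:ℝ) ≤ (ν:ℝ) * Cv := mul_nonneg (Nat.cast_nonneg ν) hCv.le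
          linarith only [h1, h2]
        · have : γ^2/(8*(E2+1)*D1) = (γ^2/(8*(E2+1)))/D1 := by
            rw [div_div]
          rw [← this]; exact heη2
      linarith only [hg3, hg4]
    have hG2small : ‖Gf2 A s ν x σ‖ ≤ E2 := by
      have h := hG2bd x σ
      rw [hm1, one_pow, mul_one] at h
      have h2 : Cv * ‖iE' x‖ ≤ Mξ + Cv := by
        rw [hMξdef]
        have := mul_le_mul_of_nonneg_left hxnub hCv.le
        linarith only [this]
      have h3 : (ν:ℝ) * (ν:ℝ) * (Cv * ‖iE' x‖) ≤ E2 := by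
        rw [hE2def]
        exact mul_le_mul_of_nonneg_left h2
          (mul_nonneg (Nat.cast_nonneg ν) (Nat.cast_nonneg ν))
      linarith only [h, h3]
    have hinn : |⟪Gf2 A s ν x σ, Gf A s ν x σ⟫| ≤ E2 * (γ^2/(8*(E2+1))) :=
      le_trans (abs_real_inner_le_norm _ _)
        (mul_le_mul4 hG2small hGsmall (norm_nonneg _) (norm_nonneg _))
    have hfin := arith_psi2 hγ hE2 hinn hG1low
    have hps : psi2 A s ν x σ
        = 2 * ⟪Gf2 A s ν x σ, Gf A s ν x σ⟫ + 2 * ‖Gf1 A s ν x σ‖^2 := rfl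
    rw [hps, hc₂def]
    linarith only [hfin]
  -- ====== first derivative bound at 0 ======
  have hψ1bd : |psi1 A s ν x 0| ≤ C₄ * ‖iE' e‖ := by
    have hG1e0 : ‖Gf1 A s ν e 0‖ ≤ (ν:ℝ) * Cv := by
      have h := hG1bd e 0
      rw [abs_zero, max_eq_left zero_le_one, one_pow, mul_one] at h
      have h2 : (ν:ℝ) * (Cv * ‖iE' e‖) ≤ (ν:ℝ) * Cv := by
        have h3 : Cv * ‖iE' e‖ ≤ Cv := by
          have := mul_le_mul_of_nonneg_left hee1 hCv.le
          linarith only [this]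
        exact mul_le_mul_of_nonneg_left h3 (Nat.cast_nonneg ν)
      linarith only [h, h2]
    have hG1x0 : ‖Gf1 A s ν x 0‖ ≤ γ + (ν:ℝ) * Cv := by
      rw [hG1x 0]
      calc ‖Gf1 A s ν ξ 0 + Gf1 A s ν e 0‖
          ≤ ‖Gf1 A s ν ξ 0‖ + ‖Gf1 A s ν e 0‖ := norm_add_le _ _
        _ ≤ γ + (ν:ℝ) * Cv := by rw [hGf1ξ0]; linarith only [hG1e0]
    have hps : psi1 A s ν x 0 = 2 * ⟪Gf1 A s ν x 0, Gf A s ν x 0⟫ := rfl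
    have hip : |⟪Gf1 A s ν x 0, Gf A s ν x 0⟫| ≤ (γ + (ν:ℝ)*Cv) * (K * ‖iE' e‖) :=
      le_trans (abs_real_inner_le_norm _ _)
        (mul_le_mul4 hG1x0 hGx0bd (norm_nonneg _) (norm_nonneg _))
    rw [hps, abs_mul, abs_two, hC₄def]
    calc 2 * |⟪Gf1 A s ν x 0, Gf A s ν x 0⟫|
        ≤ 2 * ((γ + (ν:ℝ)*Cv) * (K * ‖iE' e‖)) := by linarith only [hip]
      _ = 2 * (γ + (ν:ℝ) * Cv) * K * ‖iE' e‖ := by ring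
  -- ====== minimization on [-δ, δ] ======
  have h0mem : (0:ℝ) ∈ Set.Icc (-δ) δ := ⟨by linarith only [hδ], hδ.le⟩
  obtain ⟨σm, hσmem, hσmin⟩ := (isCompact_Icc (a := -δ) (b := δ)).exists_isMinOn
    ⟨0, h0mem⟩ hψcont.continuousOn
  have hσmin' : ∀ σ ∈ Set.Icc (-δ) δ, ψ σm ≤ ψ σ := fun σ hσ => hσmin hσ
  have hσm0 : ψ σm ≤ ψ 0 := hσmin' 0 h0mem
  -- strict convexity
  have hderiv1 : deriv ψ = psi1 A s ν x := funext fun σ => (hasDerivAt_psi0 A s ν x σ).deriv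
  have SC : StrictConvexOn ℝ (Set.Icc (-δ) δ) ψ := by
    refine strictConvexOn_of_deriv2_pos (convex_Icc _ _) hψcont.continuousOn fun σ hσ => ?_
    rw [interior_Icc] at hσ
    have hit : deriv^[2] ψ σ = psi2 A s ν x σ := by
      rw [show deriv^[2] ψ = deriv (deriv ψ) from rfl, hderiv1]
      exact (hasDerivAt_psi1 A s ν x σ).deriv
    rw [hit]
    have habs : |σ| ≤ δ := abs_le.mpr ⟨hσ.1.le, hσ.2.le⟩
    exact lt_of_lt_of_le hc₂ (hψ2lb σ habs)
  -- interior location of the minimum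
  have hint : |σm| < δ := by
    rcases lt_or_ge |σm| δ with h | h
    · exact h
    · exfalso
      have := hout σm h
      linarith only [this, hσm0]
  have hσmlt := abs_lt.mp hint
  -- zero derivative at the minimum
  have hloc : IsLocalMin ψ σm :=
    hσmin.isLocalMin (Icc_mem_nhds hσmlt.1 hσmlt.2)
  have hder0 : psi1 A s ν x σm = 0 :=
    hloc.hasDerivAt_eq_zero (hasDerivAt_psi0 A s ν x σm)
  -- continuity of psi1
  have hψ1diff : Differentiable ℝ (psi1 A s ν x) :=
    fun σ => (hasDerivAt_psi1 A s ν x σ).differentiableAt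
  have hψ1cont : Continuous (psi1 A s ν x) := hψ1diff.continuous
  refine ⟨s + σm, ?_, ?_, ?_, ?_⟩
  · -- global minimum
    intro τ
    rw [hbridge τ, hbridge (s + σm), add_sub_cancel_left]
    rcases le_or_gt |τ - s| δ with h | h
    · exact hσmin' (τ - s) (abs_le.mp h |> fun hh => ⟨hh.1, hh.2⟩)
    · have := hout (τ - s) h.le
      linarith only [this, hσm0]
  · -- uniqueness
    intro τ' hτ'
    have hτ'0 : ψ (τ' - s) ≤ ψ 0 := by
      have h := hτ' s
      rwa [hbridge s, hbridge τ', sub_self] at h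
    have hmem' : τ' - s ∈ Set.Icc (-δ) δ := by
      by_contra hcon
      have habs : δ < |τ' - s| := by
        rcases lt_or_ge δ |τ' - s| with h | h
        · exact h
        · exact absurd (abs_le.mp h |> fun hh => (⟨hh.1, hh.2⟩ : τ' - s ∈ Set.Icc (-δ) δ)) hcon
      have := hout (τ' - s) habs.le
      linarith only [this, hτ'0]
    have hIsMin' : IsMinOn ψ (Set.Icc (-δ) δ) (τ' - s) := by
      refine isMinOn_iff.mpr fun σ hσ => ?_
      have h := hτ' (s + σ)
      rwa [hbridge (s + σ), hbridge τ', add_sub_cancel_left] at h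
    have heq := SC.eq_of_isMinOn hIsMin' hσmin hmem' hσmem
    linarith only [heq]
  · -- |τx - s| ≤ L₀ ⬝ ‖x - ξ‖
    rw [add_sub_cancel_left, hnev, hL₀def]
    rcases lt_trichotomy σm 0 with hsgn | hsgn | hsgn
    · -- σm < 0 : MVT on [σm, 0]
      obtain ⟨ζ, hζ, hslope⟩ := exists_hasDerivAt_eq_slope (psi1 A s ν x) (psi2 A s ν x)
        hsgn hψ1cont.continuousOn (fun t _ => hasDerivAt_psi1 A s ν x t)
      have hζδ : |ζ| ≤ δ := by
        rw [abs_le]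
        constructor
        · linarith only [hζ.1, hσmlt.1]
        · linarith only [hζ.2, hδ]
      have hc2le : c₂ ≤ (psi1 A s ν x 0 - psi1 A s ν x σm)/(0 - σm) := by
        rw [← hslope]; exact hψ2lb ζ hζδ
      rw [hder0, sub_zero] at hc2le
      have h1 : c₂ * (-σm) ≤ -(-(psi1 A s ν x 0)) := by
        have hpos : (0:ℝ) < 0 - σm := by linarith only [hsgn]
        have := (le_div_iff₀ hpos).mp hc2le
        have h2 : (0:ℝ) - σm = -σm := by ring
        rw [h2] at this
        linarith only [this]
      have habs : |(-(psi1 A s ν x 0))| ≤ C₄ * ‖iE' e‖ := by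
        rw [abs_neg]; exact hψ1bd
      have := arith_mvt hc₂ (by linarith only [hsgn] : (0:ℝ) < -σm) h1 habs hle0
      rw [abs_of_neg hsgn]
      exact this
    · rw [hsgn, abs_zero]
      exact mul_nonneg (by
        have := div_nonneg hC₄.le hc₂.le
        linarith only [this]) hle0
    · -- 0 < σm : MVT on [0, σm]
      obtain ⟨ζ, hζ, hslope⟩ := exists_hasDerivAt_eq_slope (psi1 A s ν x) (psi2 A s ν x)
        hsgn hψ1cont.continuousOn (fun t _ => hasDerivAt_psi1 A s ν x t)
      have hζδ : |ζ| ≤ δ := by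
        rw [abs_le]
        constructor
        · linarith only [hζ.1, hδ]
        · linarith only [hζ.2, hσmlt.2]
      have hc2le : c₂ ≤ (psi1 A s ν x σm - psi1 A s ν x 0)/(σm - 0) := by
        rw [← hslope]; exact hψ2lb ζ hζδ
      rw [hder0, zero_sub, sub_zero] at hc2le
      have h1 : c₂ * σm ≤ -(psi1 A s ν x 0) := by
        have := (le_div_iff₀ hsgn).mp hc2le
        linarith only [this]
      have := arith_mvt hc₂ hsgn h1 hψ1bd hle0
      rw [abs_of_pos hsgn]
      exact this
  · -- value bound
    rw [hbridge, add_sub_cancel_left, hnev, hL₁def]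
    calc ψ σm ≤ ψ 0 := hσm0
      _ ≤ (K * ‖iE' e‖)^2 := hψ0bd
      _ ≤ (K^2 * ε + 1) * ‖iE' e‖ := arith_L1 hK.le hle0 hee
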